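/- Let α ∈ (0, π] and let G = A_α = {z ∈ ℝ² \ {0} : the angle between the vector z and the positive x-axis e₁ is less than α/2} be the angular (sector) domain. Then for every x ∈ G and every r ∈ (0,1), the metric ball B_s(x,r) = {y ∈ G : s_G(x,y) < r} is a convex subset of ℝ². -/

import Mathlib

open RealInnerProductSpace

/-- The triangular ratio metric `s_G(x,y) = sup_{z ∈ ∂G} |x−y|/(|z−x|+|z−y|)`. -/
noncomputable def sMetric {n : ℕ} (G : Set (EuclideanSpace ℝ (Fin n)))
    (x y : EuclideanSpace ℝ (Fin n)) : ℝ :=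
  ⨆ z ∈ frontier G, dist x y / (dist z x + dist z y)

/-- The metric ball `B_s(x,r) = {y ∈ G : s_G(x,y) < r}`. -/
def sBall {n : ℕ} (G : Set (EuclideanSpace ℝ (Fin n))) (x : EuclideanSpace ℝ (Fin n))
    (r : ℝ) : Set (EuclideanSpace ℝ (Fin n)) :=
  {y ∈ G | sMetric G x y < r}

namespace TriRatioAux

variable {E : Type*} [NormedAddCommGroup E] [InnerProductSpace ℝ E]

private lemma le_of_sq_le_sq {a b : ℝ} (ha : 0 ≤ a) (hb : 0 ≤ b) (h : a ^ 2 ≤ b ^ 2) :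
    a ≤ b := by nlinarith

/-- Reflection across the hyperplane orthogonal to `u` through the origin. -/
noncomputable def refl (u y : E) : E := y - (2 * ⟪y, u⟫) • u

lemma inner_refl_left (u y : E) (hu : ‖u‖ = 1) : ⟪refl u y, u⟫ = -⟪y, u⟫ := by
  have huu : ⟪u, u⟫ = 1 := by
    rw [real_inner_self_eq_norm_sq, hu]; norm_num
  simp [refl, inner_sub_left, real_inner_smul_left, huu]
  rw [hu]; ring

lemma inner_refl_right (x u y : E) (hu : ‖u‖ = 1) :
    ⟪x, refl u y⟫ = ⟪x, y⟫ - 2 * ⟪y, u⟫ * ⟪x, u⟫ := by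
  simp [refl, inner_sub_right, real_inner_smul_right]
  try ring

lemma norm_refl_sq (u y : E) (hu : ‖u‖ = 1) : ‖refl u y‖ ^ 2 = ‖y‖ ^ 2 := by
  have huu : ⟪u, u⟫ = 1 := by
    rw [real_inner_self_eq_norm_sq, hu]; norm_num
  have h1 : ‖refl u y‖ ^ 2 = ⟪refl u y, refl u y⟫ := (real_inner_self_eq_norm_sq _).symm
  have h2 : ‖y‖ ^ 2 = ⟪y, y⟫ := (real_inner_self_eq_norm_sq _).symm
  rw [h1, h2, refl]
  rw [inner_sub_left, inner_sub_right, inner_sub_right, real_inner_smul_left,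
    real_inner_smul_left, real_inner_smul_right, real_inner_smul_right, huu,
    real_inner_comm u y]
  ring

lemma norm_refl (u y : E) (hu : ‖u‖ = 1) : ‖refl u y‖ = ‖y‖ :=
  le_antisymm
    (le_of_sq_le_sq (norm_nonneg _) (norm_nonneg _) (norm_refl_sq u y hu).le)
    (le_of_sq_le_sq (norm_nonneg _) (norm_nonneg _) (norm_refl_sq u y hu).ge)

lemma dist_refl_sq (u z y : E) (hu : ‖u‖ = 1) :
    ‖z - refl u y‖ ^ 2 = ‖z - y‖ ^ 2 + 4 * ⟪y, u⟫ * ⟪z, u⟫ := by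
  rw [norm_sub_sq_real, norm_sub_sq_real, norm_refl_sq u y hu, inner_refl_right z u y hu]
  ring

/-- Lemma A: a one-sided reflection bound. -/
lemma refl_le_sum (x u z y : E) (hu : ‖u‖ = 1) (hz : ⟪z, u⟫ ≤ 0) (hy : 0 ≤ ⟪y, u⟫) :
    ‖x - refl u y‖ ≤ ‖z - x‖ + ‖z - y‖ := by
  have h1 : ‖z - refl u y‖ ≤ ‖z - y‖ := by
    have hsq := dist_refl_sq u z y hu
    have hprod : ⟪y, u⟫ * ⟪z, u⟫ ≤ 0 := mul_nonpos_of_nonneg_of_nonpos hy hz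
    exact le_of_sq_le_sq (norm_nonneg _) (norm_nonneg _) (by nlinarith)
  calc ‖x - refl u y‖ ≤ ‖x - z‖ + ‖z - refl u y‖ := norm_sub_le_norm_sub_add_norm_sub x z _
    _ ≤ ‖z - x‖ + ‖z - y‖ := by rw [norm_sub_rev x z]; linarith

/-- Frontier crossing on a segment. -/
lemma exists_frontier_mem_segment {G : Set E} (hO : IsOpen G) {x p : E}
    (hx : x ∈ G) (hp : p ∉ G) : ∃ w ∈ segment ℝ x p, w ∈ frontier G := by
  by_cases hpc : p ∈ closure G
  · exact ⟨p, right_mem_segment ℝ x p, ⟨hpc, by rwa [hO.interior_eq]⟩⟩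
  · by_contra hno
    push_neg at hno
    have hconn : IsPreconnected (segment ℝ x p) := (convex_segment x p).isPreconnected
    have hsub : segment ℝ x p ⊆ G ∪ (closure G)ᶜ := by
      intro w hw
      by_cases hwc : w ∈ closure G
      · left
        have : w ∉ frontier G := hno w hw
        have : w ∈ interior G := by
          rcases (closure_eq_interior_union_frontier G ▸ hwc) with h | h
          · exact h
          · exact absurd h ‹w ∉ frontier G›
        rwa [hO.interior_eq] at this
      · exact Or.inr hwc
    obtain ⟨w, -, hwG, hwc⟩ := hconn G (closure G)ᶜ hO isClosed_closure.isOpen_compl hsub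
      ⟨x, left_mem_segment ℝ x p, hx⟩ ⟨p, right_mem_segment ℝ x p, hpc⟩
    exact hwc (subset_closure hwG)

/-- Lemma B: there is a frontier point whose distance sum is at most the reflection distance. -/
lemma exists_frontier_le_refl {G : Set E} (hO : IsOpen G) (u : E) (hu : ‖u‖ = 1)
    (hGu : ∀ w ∈ G, 0 < ⟪w, u⟫) {x y : E} (hx : x ∈ G) (hy : y ∈ G) :
    ∃ w ∈ frontier G, dist x w + dist w y ≤ ‖x - refl u y‖ := by
  have ha : 0 < ⟪x, u⟫ := hGu x hx
  have hb : 0 < ⟪y, u⟫ := hGu y hy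
  set s : ℝ := ⟪x, u⟫ / (⟪x, u⟫ + ⟪y, u⟫) with hs_def
  have hab : 0 < ⟪x, u⟫ + ⟪y, u⟫ := by linarith
  have hs0 : 0 ≤ s := le_of_lt (div_pos ha hab)
  have hs1 : s ≤ 1 := by
    rw [hs_def, div_le_one hab]; linarith
  set p : E := x + s • (refl u y - x) with hp_def
  have hpseg : p ∈ segment ℝ x (refl u y) := by
    refine ⟨1 - s, s, by linarith, hs0, by ring, ?_⟩
    rw [hp_def]
    rw [sub_smul, one_smul, smul_sub]
    abel
  have hpu : ⟪p, u⟫ = 0 := by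
    rw [hp_def]
    rw [inner_add_left, real_inner_smul_left, inner_sub_left, inner_refl_left u y hu]
    rw [hs_def]
    field_simp
    ring
  have hpG : p ∉ G := fun h => absurd hpu (ne_of_gt (hGu p h))
  obtain ⟨w, hwseg, hwf⟩ := exists_frontier_mem_segment hO hx hpG
  refine ⟨w, hwf, ?_⟩
  have hd1 : dist x w + dist w p = dist x p := dist_add_dist_of_mem_segment hwseg
  have hd2 : dist x p + dist p (refl u y) = dist x (refl u y) :=
    dist_add_dist_of_mem_segment hpseg
  have hd3 : dist p y = dist p (refl u y) := by
    have h := dist_refl_sq u p y hu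
    rw [hpu] at h
    have : ‖p - refl u y‖ ^ 2 = ‖p - y‖ ^ 2 := by rw [h]; ring
    rw [dist_eq_norm, dist_eq_norm]
    exact le_antisymm
      (le_of_sq_le_sq (norm_nonneg _) (norm_nonneg _) this.ge)
      (le_of_sq_le_sq (norm_nonneg _) (norm_nonneg _) this.le)
  calc dist x w + dist w y ≤ dist x w + (dist w p + dist p y) := by
        linarith [dist_triangle w p y]
    _ = dist x p + dist p (refl u y) := by rw [hd3] at *; linarith
    _ = dist x (refl u y) := hd2
    _ = ‖x - refl u y‖ := dist_eq_norm _ _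

/-- Separation: any point outside an open convex cone is (weakly) separated from it by a unit
functional that is strictly positive on the cone. -/
lemma sep_of_not_mem {G : Set E} [CompleteSpace E] (hG : Convex ℝ G) (hO : IsOpen G)
    (hcone : ∀ ⦃t : ℝ⦄, 0 < t → ∀ ⦃w⦄, w ∈ G → t • w ∈ G) {x₀ : E} (hx₀ : x₀ ∈ G)
    {z : E} (hz : z ∉ G) :
    ∃ u : E, ‖u‖ = 1 ∧ (∀ w ∈ G, 0 < ⟪w, u⟫) ∧ ⟪z, u⟫ ≤ 0 := by
  obtain ⟨f, hf⟩ := geometric_hahn_banach_open_point hG hO hz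
  set v : E := (InnerProductSpace.toDual ℝ E).symm f with hv_def
  have hv : ∀ y : E, ⟪v, y⟫ = f y := fun y => InnerProductSpace.toDual_symm_apply
  have hv0 : v ≠ 0 := by
    intro h
    have h1 := hf x₀ hx₀
    have h2 : f x₀ = 0 := by rw [← hv, h, inner_zero_left]
    have h3 : f z = 0 := by rw [← hv, h, inner_zero_left]
    rw [h2, h3] at h1; exact lt_irrefl 0 h1
  -- weak nonpositivity on the cone
  have hle : ∀ w ∈ G, f w ≤ 0 := by
    intro w hw
    by_contra hpos
    push_neg at hpos
    have hzpos : 0 < f z := lt_trans hpos (hf w hw)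
    have ht : (0 : ℝ) < f z / f w := div_pos hzpos hpos
    have := hf _ (hcone ht hw)
    rw [map_smul, smul_eq_mul, div_mul_cancel₀ _ (ne_of_gt hpos)] at this
    exact lt_irrefl _ this
  -- f z ≥ 0
  have hfz : 0 ≤ f z := by
    by_contra hneg
    push_neg at hneg
    have hx0le : f x₀ ≤ 0 := hle x₀ hx₀
    rcases eq_or_lt_of_le hx0le with h | h
    · have := hf x₀ hx₀; rw [h] at this; linarith
    · have ht : (0 : ℝ) < f z / (2 * f x₀) := div_pos_of_neg_of_neg hneg (by linarith)
      have := hf _ (hcone ht hx₀)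
      rw [map_smul, smul_eq_mul] at this
      have : f z / 2 < f z := by
        have hx0ne : f x₀ ≠ 0 := ne_of_lt h
        calc f z / 2 = f z / (2 * f x₀) * f x₀ := by field_simp
          _ < f z := this
      linarith
  -- strict negativity on the (open) cone
  have hlt : ∀ w ∈ G, f w < 0 := by
    intro w hw
    rcases eq_or_lt_of_le (hle w hw) with h | h
    · exfalso
      obtain ⟨ε, hε, hball⟩ := Metric.isOpen_iff.1 hO w hw
      set δ : ℝ := ε / (2 * ‖v‖ + 1) with hδ_def
      have hδpos : 0 < δ := by
        apply div_pos hε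
        have := norm_nonneg v; linarith
      have hw' : w + δ • v ∈ G := by
        apply hball
        rw [Metric.mem_ball, dist_eq_norm, add_sub_cancel_left, norm_smul,
          Real.norm_eq_abs, abs_of_pos hδpos]
        have hvpos : 0 < ‖v‖ := norm_pos_iff.2 hv0
        rw [hδ_def]
        rw [div_mul_eq_mul_div, div_lt_iff₀ (by linarith)]
        nlinarith
      have h1 := hle _ hw'
      have h2 : f (w + δ • v) = f w + δ * ⟪v, v⟫ := by
        rw [map_add, map_smul, smul_eq_mul, hv v]
      have hvv : 0 < ⟪v, v⟫ := by rw [real_inner_self_eq_norm_sq]; exact pow_pos (norm_pos_iff.2 hv0) 2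
      rw [h2, h] at h1
      nlinarith
    · exact h
  refine ⟨-(‖v‖⁻¹ • v), ?_, ?_, ?_⟩
  · rw [norm_neg, norm_smul, Real.norm_eq_abs, abs_of_nonneg (inv_nonneg.2 (norm_nonneg v)),
      inv_mul_cancel₀ (norm_ne_zero_iff.2 hv0)]
  · intro w hw
    rw [inner_neg_right, real_inner_smul_right]
    have : ⟪w, v⟫ = f w := by rw [real_inner_comm, hv w]
    rw [this]
    have := hlt w hw
    have hvpos : 0 < ‖v‖ := norm_pos_iff.2 hv0
    have : ‖v‖⁻¹ * f w < 0 := mul_neg_of_pos_of_neg (inv_pos.2 hvpos) this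
    linarith
  · rw [inner_neg_right, real_inner_smul_right]
    have : ⟪z, v⟫ = f z := by rw [real_inner_comm, hv z]
    rw [this]
    have : 0 ≤ ‖v‖⁻¹ * f z := mul_nonneg (inv_nonneg.2 (norm_nonneg v)) hfz
    linarith

/-- Ball-condition convexity: the condition `‖x - y‖ ≤ t ‖x - refl u y‖` is convex in `y`. -/
lemma ball_cond_convex (x u : E) (hu : ‖u‖ = 1) {t : ℝ} (ht0 : 0 ≤ t) (ht1 : t < 1)
    {y₁ y₂ : E} (h₁ : ‖x - y₁‖ ≤ t * ‖x - refl u y₁‖) (h₂ : ‖x - y₂‖ ≤ t * ‖x - refl u y₂‖)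
    {a b : ℝ} (ha : 0 ≤ a) (hb : 0 ≤ b) (hab : a + b = 1) :
    ‖x - (a • y₁ + b • y₂)‖ ≤ t * ‖x - refl u (a • y₁ + b • y₂)‖ := by
  have ht2 : (0 : ℝ) < 1 - t ^ 2 := by nlinarith
  set k : ℝ := 2 * t ^ 2 * ⟪x, u⟫ / (1 - t ^ 2) with hk_def
  set c : E := x + k • u with hc_def
  -- the key algebraic identity
  have key : ∀ y : E, (1 - t ^ 2) * (‖y - c‖ ^ 2 - ‖c‖ ^ 2 + ‖x‖ ^ 2)
      = ‖x - y‖ ^ 2 - t ^ 2 * ‖x - refl u y‖ ^ 2 := by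
    intro y
    have huu : ‖u‖ ^ 2 = 1 := by rw [hu]; norm_num
    have e1 : ‖y - c‖ ^ 2 = ‖y‖ ^ 2 - 2 * (⟪x, y⟫ + k * ⟪y, u⟫) + ‖c‖ ^ 2 := by
      rw [norm_sub_sq_real, hc_def, inner_add_right, real_inner_smul_right]
      rw [real_inner_comm y x]
      try ring
    have e2 : ‖c‖ ^ 2 = ‖x‖ ^ 2 + 2 * (k * ⟪x, u⟫) + k ^ 2 := by
      have : ‖c‖ ^ 2 = ⟪c, c⟫ := (real_inner_self_eq_norm_sq c).symm
      rw [this, hc_def, inner_add_left, inner_add_right, inner_add_right,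
        real_inner_smul_left, real_inner_smul_right, real_inner_smul_left,
        real_inner_smul_right]
      have h1 : ⟪x, x⟫ = ‖x‖ ^ 2 := real_inner_self_eq_norm_sq x
      have h2 : ⟪u, u⟫ = 1 := by rw [real_inner_self_eq_norm_sq u, hu]; norm_num
      have h3 : ⟪u, x⟫ = ⟪x, u⟫ := real_inner_comm x u
      rw [h1, h2, h3]
      ring
    have e3 : ‖x - y‖ ^ 2 = ‖x‖ ^ 2 - 2 * ⟪x, y⟫ + ‖y‖ ^ 2 := norm_sub_sq_real x y
    have e4 : ‖x - refl u y‖ ^ 2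
        = ‖x‖ ^ 2 - 2 * (⟪x, y⟫ - 2 * ⟪y, u⟫ * ⟪x, u⟫) + ‖y‖ ^ 2 := by
      rw [norm_sub_sq_real, norm_refl_sq u y hu, inner_refl_right x u y hu]
    rw [e1, e2, e3, e4, hk_def]
    field_simp
    ring
  -- translate the hypotheses into ball membership
  have hball : ∀ y : E, ‖x - y‖ ≤ t * ‖x - refl u y‖ → ‖y - c‖ ^ 2 ≤ ‖c‖ ^ 2 - ‖x‖ ^ 2 := by
    intro y h
    have hsq : ‖x - y‖ ^ 2 ≤ t ^ 2 * ‖x - refl u y‖ ^ 2 := by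
      have hn : 0 ≤ ‖x - y‖ := norm_nonneg _
      nlinarith [norm_nonneg (x - refl u y)]
    have := key y
    nlinarith
  have hb₁ := hball y₁ h₁
  have hb₂ := hball y₂ h₂
  set Q : ℝ := ‖c‖ ^ 2 - ‖x‖ ^ 2 with hQ_def
  have hQ0 : 0 ≤ Q := le_trans (sq_nonneg _) hb₁
  have hm : ‖(a • y₁ + b • y₂) - c‖ ^ 2 ≤ Q := by
    have hrw : (a • y₁ + b • y₂) - c = a • (y₁ - c) + b • (y₂ - c) := by
      rw [smul_sub, smul_sub]
      rw [show a • y₁ - a • c + (b • y₂ - b • c) = a • y₁ + b • y₂ - (a • c + b • c) by abel]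
      rw [← add_smul, hab, one_smul]
    have h1 : ‖y₁ - c‖ ≤ Real.sqrt Q := by
      rw [← Real.sqrt_sq (norm_nonneg (y₁ - c))]
      exact Real.sqrt_le_sqrt hb₁
    have h2 : ‖y₂ - c‖ ≤ Real.sqrt Q := by
      rw [← Real.sqrt_sq (norm_nonneg (y₂ - c))]
      exact Real.sqrt_le_sqrt hb₂
    have h3 : ‖(a • y₁ + b • y₂) - c‖ ≤ Real.sqrt Q := by
      rw [hrw]
      calc ‖a • (y₁ - c) + b • (y₂ - c)‖ ≤ ‖a • (y₁ - c)‖ + ‖b • (y₂ - c)‖ := norm_add_le _ _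
        _ = a * ‖y₁ - c‖ + b * ‖y₂ - c‖ := by
            rw [norm_smul, norm_smul, Real.norm_eq_abs, Real.norm_eq_abs,
              abs_of_nonneg ha, abs_of_nonneg hb]
        _ ≤ a * Real.sqrt Q + b * Real.sqrt Q := by
            exact add_le_add (mul_le_mul_of_nonneg_left h1 ha)
              (mul_le_mul_of_nonneg_left h2 hb)
        _ = Real.sqrt Q := by rw [← add_mul, hab, one_mul]
    calc ‖(a • y₁ + b • y₂) - c‖ ^ 2 ≤ Real.sqrt Q ^ 2 := by
          have := norm_nonneg ((a • y₁ + b • y₂) - c)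
          nlinarith [Real.sqrt_nonneg Q]
      _ = Q := Real.sq_sqrt hQ0
  -- convert back
  have hkey := key (a • y₁ + b • y₂)
  have hsq : ‖x - (a • y₁ + b • y₂)‖ ^ 2 ≤ t ^ 2 * ‖x - refl u (a • y₁ + b • y₂)‖ ^ 2 := by
    nlinarith
  apply le_of_sq_le_sq (norm_nonneg _) (mul_nonneg ht0 (norm_nonneg _))
  calc ‖x - (a • y₁ + b • y₂)‖ ^ 2 ≤ t ^ 2 * ‖x - refl u (a • y₁ + b • y₂)‖ ^ 2 := hsq
    _ = (t * ‖x - refl u (a • y₁ + b • y₂)‖) ^ 2 := by ring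

end TriRatioAux

section sMetricLemmas

variable {n : ℕ} (G : Set (EuclideanSpace ℝ (Fin n))) (x y : EuclideanSpace ℝ (Fin n))

lemma sMetric_nonneg : 0 ≤ sMetric G x y :=
  Real.iSup_nonneg fun _ => Real.iSup_nonneg fun _ =>
    div_nonneg dist_nonneg (add_nonneg dist_nonneg dist_nonneg)

lemma sMetric_le {t : ℝ} (ht : 0 ≤ t)
    (h : ∀ z ∈ frontier G, dist x y / (dist z x + dist z y) ≤ t) : sMetric G x y ≤ t :=
  Real.iSup_le (fun z => Real.iSup_le (fun hz => h z hz) ht) ht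

lemma le_sMetric {w : EuclideanSpace ℝ (Fin n)} (hw : w ∈ frontier G) :
    dist x y / (dist w x + dist w y) ≤ sMetric G x y := by
  have hb : BddAbove (Set.range fun z : EuclideanSpace ℝ (Fin n) =>
      ⨆ _ : z ∈ frontier G, dist x y / (dist z x + dist z y)) := by
    refine ⟨1, ?_⟩
    rintro _ ⟨z, rfl⟩
    refine Real.iSup_le (fun hz => ?_) zero_le_one
    rcases eq_or_lt_of_le (add_nonneg (dist_nonneg (x := z) (y := x))
        (dist_nonneg (x := z) (y := y))) with h | h
    · rw [← h, div_zero]; exact zero_le_one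
    · rw [div_le_one h]
      calc dist x y ≤ dist x z + dist z y := dist_triangle x z y
        _ = dist z x + dist z y := by rw [dist_comm x z]
  calc dist x y / (dist w x + dist w y)
      = ⨆ _ : w ∈ frontier G, dist x y / (dist w x + dist w y) :=
        (ciSup_pos (f := fun _ : w ∈ frontier G => dist x y / (dist w x + dist w y)) hw).symm
    _ ≤ sMetric G x y := le_ciSup hb w

end sMetricLemmas

open TriRatioAux in
/-- The main workhorse: `sBall` is convex in any open convex cone. -/
theorem sBall_convex_of_open_convex_cone {n : ℕ} {G : Set (EuclideanSpace ℝ (Fin n))}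
    (hG : Convex ℝ G) (hO : IsOpen G)
    (hcone : ∀ ⦃t : ℝ⦄, 0 < t → ∀ ⦃w⦄, w ∈ G → t • w ∈ G)
    {x : EuclideanSpace ℝ (Fin n)} (hxG : x ∈ G) {r : ℝ} (hr0 : 0 < r) (hr1 : r < 1) :
    Convex ℝ (sBall G x r) := by
  intro y₁ hy₁ y₂ hy₂ a b ha hb hab
  obtain ⟨hy₁G, hs₁⟩ := hy₁
  obtain ⟨hy₂G, hs₂⟩ := hy₂
  have hmG : a • y₁ + b • y₂ ∈ G := hG hy₁G hy₂G ha hb hab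
  set t : ℝ := max (sMetric G x y₁) (sMetric G x y₂) with ht_def
  have ht0 : 0 ≤ t := le_trans (sMetric_nonneg G x y₁) (le_max_left _ _)
  have htr : t < r := max_lt hs₁ hs₂
  have ht1 : t < 1 := lt_trans htr hr1
  have hfrontier_not_mem : ∀ w ∈ frontier G, w ∉ G := by
    intro w hw hwG
    have : w ∈ interior G := by rwa [hO.interior_eq]
    exact hw.2 this
  -- Claim 1: for any admissible unit vector u, both y₁ and y₂ satisfy the reflection bound
  have claim1 : ∀ u : EuclideanSpace ℝ (Fin n), ‖u‖ = 1 → (∀ w ∈ G, 0 < ⟪w, u⟫) →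
      ∀ y, y ∈ G → sMetric G x y ≤ t → ‖x - y‖ ≤ t * ‖x - refl u y‖ := by
    intro u hu hGu y hyG hyt
    obtain ⟨w, hwf, hwle⟩ := exists_frontier_le_refl hO u hu hGu hxG hyG
    have hwx : w ≠ x := fun h => hfrontier_not_mem w hwf (h ▸ hxG)
    have hpos : 0 < dist w x + dist w y :=
      add_pos_of_pos_of_nonneg (dist_pos.2 hwx) dist_nonneg
    have h1 : dist x y / (dist w x + dist w y) ≤ t := le_trans (le_sMetric G x y hwf) hyt
    have h2 : dist x y ≤ t * (dist w x + dist w y) := by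
      rwa [div_le_iff₀ hpos] at h1
    have h3 : dist x w + dist w y ≤ ‖x - refl u y‖ := hwle
    have h4 : dist w x + dist w y ≤ ‖x - refl u y‖ := by rwa [dist_comm x w] at h3
    calc ‖x - y‖ = dist x y := (dist_eq_norm x y).symm
      _ ≤ t * (dist w x + dist w y) := h2
      _ ≤ t * ‖x - refl u y‖ := mul_le_mul_of_nonneg_left h4 ht0
  refine ⟨hmG, ?_⟩
  refine lt_of_le_of_lt (sMetric_le G x _ ht0 ?_) htr
  intro z hzf
  have hzG : z ∉ G := hfrontier_not_mem z hzf
  obtain ⟨u, hu, hGu, hzu⟩ := sep_of_not_mem hG hO hcone hxG hzG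
  have hy₁b := claim1 u hu hGu y₁ hy₁G (le_max_left _ _)
  have hy₂b := claim1 u hu hGu y₂ hy₂G (le_max_right _ _)
  have hmb : ‖x - (a • y₁ + b • y₂)‖ ≤ t * ‖x - refl u (a • y₁ + b • y₂)‖ :=
    ball_cond_convex x u hu ht0 ht1 hy₁b hy₂b ha hb hab
  have hA : ‖x - refl u (a • y₁ + b • y₂)‖ ≤ ‖z - x‖ + ‖z - (a • y₁ + b • y₂)‖ :=
    refl_le_sum x u z _ hu hzu (le_of_lt (hGu _ hmG))
  have hzx : z ≠ x := fun h => hzG (h ▸ hxG)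
  have hpos : 0 < dist z x + dist z (a • y₁ + b • y₂) :=
    add_pos_of_pos_of_nonneg (dist_pos.2 hzx) dist_nonneg
  rw [div_le_iff₀ hpos]
  calc dist x (a • y₁ + b • y₂) = ‖x - (a • y₁ + b • y₂)‖ := dist_eq_norm _ _
    _ ≤ t * ‖x - refl u (a • y₁ + b • y₂)‖ := hmb
    _ ≤ t * (‖z - x‖ + ‖z - (a • y₁ + b • y₂)‖) := mul_le_mul_of_nonneg_left hA ht0
    _ = t * (dist z x + dist z (a • y₁ + b • y₂)) := by
        rw [dist_eq_norm, dist_eq_norm]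

/-- The sector as an explicit open convex cone. -/
lemma sector_eq (α : ℝ) (hα : α ∈ Set.Ioc 0 Real.pi) :
    {z : EuclideanSpace ℝ (Fin 2) | z ≠ 0 ∧
      EuclideanGeometry.angle z 0 (EuclideanSpace.single 0 1) < α / 2}
    = {z : EuclideanSpace ℝ (Fin 2) |
        ‖z‖ * Real.cos (α / 2) < ⟪z, (EuclideanSpace.single 0 1 : EuclideanSpace ℝ (Fin 2))⟫} := by
  obtain ⟨hα0, hαπ⟩ := hα
  have hβ0 : 0 < α / 2 := by linarith
  have hβπ : α / 2 ≤ Real.pi / 2 := by linarith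
  have hβπ' : α / 2 ≤ Real.pi := by linarith [Real.pi_pos]
  have hnorme : ‖(EuclideanSpace.single 0 1 : EuclideanSpace ℝ (Fin 2))‖ = 1 := by
    rw [EuclideanSpace.norm_single]; norm_num
  ext z
  simp only [Set.mem_setOf_eq]
  have hangle : z ≠ 0 → EuclideanGeometry.angle z 0 (EuclideanSpace.single 0 1)
      = Real.arccos (⟪z, (EuclideanSpace.single 0 1 : EuclideanSpace ℝ (Fin 2))⟫ / ‖z‖) := by
    intro hz
    rw [EuclideanGeometry.angle, InnerProductGeometry.angle]
    simp only [vsub_eq_sub, sub_zero]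
    rw [hnorme, mul_one]
  constructor
  · rintro ⟨hz, hang⟩
    rw [hangle hz] at hang
    set q : ℝ := ⟪z, (EuclideanSpace.single 0 1 : EuclideanSpace ℝ (Fin 2))⟫ / ‖z‖ with hq_def
    have hzn : 0 < ‖z‖ := norm_pos_iff.2 hz
    have hq1 : |q| ≤ 1 := by
      rw [hq_def]
      have := abs_real_inner_div_norm_mul_norm_le_one z
        (EuclideanSpace.single 0 1 : EuclideanSpace ℝ (Fin 2))
      rwa [hnorme, mul_one] at this
    have hcos : Real.cos (α / 2) < Real.cos (Real.arccos q) :=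
      Real.cos_lt_cos_of_nonneg_of_le_pi (Real.arccos_nonneg q) hβπ' hang
    rw [Real.cos_arccos (abs_le.1 hq1).1 (abs_le.1 hq1).2] at hcos
    have : ‖z‖ * Real.cos (α / 2) < ‖z‖ * q := by
      exact mul_lt_mul_of_pos_left hcos hzn
    rw [hq_def, mul_div_cancel₀ _ (ne_of_gt hzn)] at this
    exact this
  · intro h
    have hz : z ≠ 0 := by
      intro hz0
      rw [hz0] at h
      simp only [norm_zero, zero_mul, inner_zero_left] at h
      exact lt_irrefl 0 h
    refine ⟨hz, ?_⟩
    rw [hangle hz]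
    set q : ℝ := ⟪z, (EuclideanSpace.single 0 1 : EuclideanSpace ℝ (Fin 2))⟫ / ‖z‖ with hq_def
    have hzn : 0 < ‖z‖ := norm_pos_iff.2 hz
    have hq : Real.cos (α / 2) < q := by
      rw [hq_def, lt_div_iff₀ hzn]
      rw [mul_comm]
      exact h
    by_contra hge
    push_neg at hge
    have hq1 : |q| ≤ 1 := by
      rw [hq_def]
      have := abs_real_inner_div_norm_mul_norm_le_one z
        (EuclideanSpace.single 0 1 : EuclideanSpace ℝ (Fin 2))
      rwa [hnorme, mul_one] at this
    have : Real.cos (Real.arccos q) ≤ Real.cos (α / 2) := by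
      rcases eq_or_lt_of_le hge with h' | h'
      · rw [h']
      · exact le_of_lt (Real.cos_lt_cos_of_nonneg_of_le_pi (by linarith) (Real.arccos_le_pi q) h')
    rw [Real.cos_arccos (abs_le.1 hq1).1 (abs_le.1 hq1).2] at this
    linarith

/-- Let α ∈ (0, π] and let G = A_α = {z ∈ ℝ² \ {0} : ∠(z,0,e₁) < α/2} be the angular
(sector) domain. Then for every x ∈ G and every r ∈ (0,1), the metric ball B_s(x,r)
is a convex subset of ℝ². -/
theorem sBall_sector_convex (α : ℝ) (hα : α ∈ Set.Ioc 0 Real.pi)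
    (x : EuclideanSpace ℝ (Fin 2))
    (hx : x ∈ {z : EuclideanSpace ℝ (Fin 2) | z ≠ 0 ∧
      EuclideanGeometry.angle z 0 (EuclideanSpace.single 0 1) < α / 2})
    (r : ℝ) (hr : r ∈ Set.Ioo (0:ℝ) 1) :
    Convex ℝ (sBall {z : EuclideanSpace ℝ (Fin 2) | z ≠ 0 ∧
      EuclideanGeometry.angle z 0 (EuclideanSpace.single 0 1) < α / 2} x r) := by
  rw [sector_eq α hα] at hx ⊢
  set e : EuclideanSpace ℝ (Fin 2) := EuclideanSpace.single 0 1 with he_def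
  set C : Set (EuclideanSpace ℝ (Fin 2)) := {z | ‖z‖ * Real.cos (α / 2) < ⟪z, e⟫} with hC_def
  have hcos : 0 ≤ Real.cos (α / 2) := by
    apply Real.cos_nonneg_of_mem_Icc
    constructor
    · linarith [hα.1, Real.pi_pos]
    · linarith [hα.2]
  have hGconv : Convex ℝ C := by
    intro z₁ h₁ z₂ h₂ a b ha hb hab
    simp only [hC_def, Set.mem_setOf_eq] at h₁ h₂ ⊢
    have hinner : ⟪a • z₁ + b • z₂, e⟫ = a * ⟪z₁, e⟫ + b * ⟪z₂, e⟫ := by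
      rw [inner_add_left, real_inner_smul_left, real_inner_smul_left]
    have hnorm : ‖a • z₁ + b • z₂‖ ≤ a * ‖z₁‖ + b * ‖z₂‖ := by
      calc ‖a • z₁ + b • z₂‖ ≤ ‖a • z₁‖ + ‖b • z₂‖ := norm_add_le _ _
        _ = a * ‖z₁‖ + b * ‖z₂‖ := by
            rw [norm_smul, norm_smul, Real.norm_eq_abs, Real.norm_eq_abs,
              abs_of_nonneg ha, abs_of_nonneg hb]
    have hstep : a * (‖z₁‖ * Real.cos (α / 2)) + b * (‖z₂‖ * Real.cos (α / 2))
        < a * ⟪z₁, e⟫ + b * ⟪z₂, e⟫ := by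
      rcases ha.lt_or_eq with ha' | ha'
      · exact add_lt_add_of_lt_of_le (mul_lt_mul_of_pos_left h₁ ha')
          (mul_le_mul_of_nonneg_left (le_of_lt h₂) hb)
      · have hb1 : b = 1 := by rw [← ha'] at hab; linarith
        rw [← ha', hb1]
        simpa using h₂
    calc ‖a • z₁ + b • z₂‖ * Real.cos (α / 2) ≤ (a * ‖z₁‖ + b * ‖z₂‖) * Real.cos (α / 2) :=
          mul_le_mul_of_nonneg_right hnorm hcos
      _ = a * (‖z₁‖ * Real.cos (α / 2)) + b * (‖z₂‖ * Real.cos (α / 2)) := by ring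
      _ < a * ⟪z₁, e⟫ + b * ⟪z₂, e⟫ := hstep
      _ = ⟪a • z₁ + b • z₂, e⟫ := hinner.symm
  have hGopen : IsOpen C := by
    apply isOpen_lt
    · exact continuous_norm.mul continuous_const
    · exact Continuous.inner continuous_id continuous_const
  have hGcone : ∀ ⦃t : ℝ⦄, 0 < t → ∀ ⦃w⦄, w ∈ C → t • w ∈ C := by
    intro t ht w hw
    simp only [hC_def, Set.mem_setOf_eq] at hw ⊢
    rw [norm_smul, Real.norm_eq_abs, abs_of_pos ht, real_inner_smul_left]
    calc t * ‖w‖ * Real.cos (α / 2) = t * (‖w‖ * Real.cos (α / 2)) := by ring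
      _ < t * ⟪w, e⟫ := mul_lt_mul_of_pos_left hw ht
  exact sBall_convex_of_open_convex_cone hGconv hGopen hGcone hx hr.1 hr.2
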